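/- arXiv:0805.4431 — 6 statements merged into one kernel-verified Lean document; each statement's English description precedes it below -/
import Mathlib

section
/- Let D be a monoidal category, M an object of D, and suppose the morphism φ : M ⊗ A → M (induced by a morphism A → 1 and the right unitor) is an isomorphism. Then for any object N and any morphism π : N ⊗ A → N of the same type, the map Hom(M, N ⊗ A) → Hom(M, N) given by postcomposition with π admits a two-sided inverse given by f ↦ (f ⊗ id_A) ∘ φ⁻¹ whenever π ∘ (f ⊗ id_A) ∘ φ⁻¹ recovers f for all f : M → N; in particular if N ⊗ A → N is split by the relevant structure maps, postcomposition Hom(M, N ⊗ A) → Hom(M, N) is a bijection. -/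
open CategoryTheory CategoryTheory.MonoidalCategory

private lemma aux_nat {C : Type*} [Category C] [MonoidalCategory C]
    {A : C} (v : A ⟶ 𝟙_ C) {X Y : C} (f : X ⟶ Y) :
    f ▷ A ≫ (Y ◁ v) ≫ (ρ_ Y).hom = ((X ◁ v) ≫ (ρ_ X).hom) ≫ f := by
  rw [← whisker_exchange_assoc]
  simp

private lemma aux_E1 {C : Type*} [Category C] [MonoidalCategory C]
    {A : C} (v : A ⟶ 𝟙_ C) {M N : C} (f : M ⟶ N ⊗ A) :
    (f ≫ (N ◁ v) ≫ (ρ_ N).hom) ▷ A =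
      f ▷ A ≫ (α_ N A A).hom ≫ (N ◁ ((v ▷ A) ≫ (λ_ A).hom)) := by
  simp only [comp_whiskerRight, Category.assoc, MonoidalCategory.whiskerLeft_comp]
  rw [← associator_naturality_middle_assoc]
  rw [MonoidalCategory.triangle]

private lemma aux_E2 {C : Type*} [Category C] [MonoidalCategory C]
    {A : C} (v : A ⟶ 𝟙_ C) {M N : C} (f : M ⟶ N ⊗ A) :
    ((M ◁ v) ≫ (ρ_ M).hom) ≫ f =
      f ▷ A ≫ (α_ N A A).hom ≫ (N ◁ ((A ◁ v) ≫ (ρ_ A).hom)) := by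
  rw [← aux_nat v f]
  simp only [Category.assoc, MonoidalCategory.whiskerLeft_comp]
  congr 1
  rw [← associator_naturality_right_assoc, MonoidalCategory.whiskerLeft_rightUnitor]
  simp

/-- (rl3 abstracted) Let `A` be an idempotent object (`v : A ⟶ 𝟙`, both projections
`A ⊗ A ⟶ A` isomorphisms) and `M` a module over `A` (the projection `M ⊗ A ⟶ M` is an
isomorphism). Then for every `N`, postcomposition with the projection `N ⊗ A ⟶ N`
induces a bijection `Hom(M, N ⊗ A) ≃ Hom(M, N)`. -/
theorem stmt6 {C : Type*} [Category C] [MonoidalCategory C] [SymmetricCategory C]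
    {A : C} (v : A ⟶ 𝟙_ C)
    (h₁ : IsIso ((A ◁ v) ≫ (ρ_ A).hom)) (h₂ : IsIso ((v ▷ A) ≫ (λ_ A).hom))
    {M : C} (hM : IsIso ((M ◁ v) ≫ (ρ_ M).hom)) :
    ∀ N : C, Function.Bijective
      (fun f : M ⟶ N ⊗ A => f ≫ (N ◁ v) ≫ (ρ_ N).hom) := by
  intro N
  constructor
  · intro f g h
    simp only at h
    have e : f ▷ A ≫ (α_ N A A).hom ≫ (N ◁ ((v ▷ A) ≫ (λ_ A).hom)) =
        g ▷ A ≫ (α_ N A A).hom ≫ (N ◁ ((v ▷ A) ≫ (λ_ A).hom)) := by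
      rw [← aux_E1, ← aux_E1, h]
    have hw : IsIso (N ◁ ((v ▷ A) ≫ (λ_ A).hom)) := by
      exact inferInstance
    have e2 : f ▷ A = g ▷ A := by
      have := e
      rw [← Category.assoc, ← Category.assoc, cancel_mono, cancel_mono] at this
      exact this
    have e3 : ((M ◁ v) ≫ (ρ_ M).hom) ≫ f = ((M ◁ v) ≫ (ρ_ M).hom) ≫ g := by
      rw [aux_E2 v f, aux_E2 v g, e2]
    rwa [cancel_epi] at e3
  · intro f
    refine ⟨inv ((M ◁ v) ≫ (ρ_ M).hom) ≫ f ▷ A, ?_⟩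
    simp [aux_nat v f]
end

section
/- Let D be a triangulated category, S a family of triangulated functors s_n : D → D_n indexed by integers n ≥ 0, obtained as s_n = Π_{<n+1} ∘ Π_{≥n} from a filtration by orthogonal thick subcategories as in the slice filtration. If M ∈ D satisfies s_n(M) = 0 for all n, and M lies in DT_{<N} for some N while also Π_{≥n}-truncations exist for all n, then M = 0. -/
open CategoryTheory CategoryTheory.Limits CategoryTheory.Pretriangulated

/-- (slconserv) The total slice functor is conservative: if all slices `s_n(M)` of `M`
vanish, and `M` lies in `DT_{<N}` while `Π_{≥0}M ≅ M`, then `M ≅ 0`. The slice filtration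
is encoded by truncation triangles `A n → M → B n → A n [1]` with `A n ∈ DT_{≥n}`,
`B n ∈ DT_{<n}`, transition maps `t n : A (n+1) → A n` over `M`, and slice triangles
`A (n+1) → A n → s n → A (n+1)[1]`. -/
theorem stmt9 {C : Type*} [Category C] [Preadditive C] [HasZeroObject C] [HasShift C ℤ]
    [∀ n : ℤ, (shiftFunctor C n).Additive] [Pretriangulated C]
    (Pge Plt : ℕ → C → Prop)
    (horth : ∀ (n : ℕ) (P Q : C) (k : ℤ), Pge n P → Plt n Q → ∀ f : (P⟦k⟧) ⟶ Q, f = 0)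
    (M : C) (N : ℕ)
    (A : ℕ → C) (a : ∀ n, A n ⟶ M)
    (B : ℕ → C) (b : ∀ n, M ⟶ B n) (c : ∀ n, B n ⟶ (A n)⟦(1 : ℤ)⟧)
    (hA : ∀ n, Pge n (A n)) (hB : ∀ n, Plt n (B n))
    (htri : ∀ n, Triangle.mk (a n) (b n) (c n) ∈ distTriang C)
    (t : ∀ n, A (n + 1) ⟶ A n) (ht : ∀ n, t n ≫ a n = a (n + 1))
    (s : ℕ → C) (σ : ∀ n, A n ⟶ s n) (δ : ∀ n, s n ⟶ (A (n + 1))⟦(1 : ℤ)⟧)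
    (hstri : ∀ n, Triangle.mk (t n) (σ n) (δ n) ∈ distTriang C)
    (ha0 : IsIso (a 0))
    (hM : Plt N M)
    (hs : ∀ n, IsZero (s n)) :
    IsZero M := by
  have htiso : ∀ n, IsIso (t n) := fun n =>
    (Triangle.isZero₃_iff_isIso₁ _ (hstri n)).1 (hs n)
  have haiso : ∀ n, IsIso (a n) := by
    intro n
    induction n with
    | zero => exact ha0
    | succ k ih =>
      rw [← ht k]
      exact IsIso.comp_isIso
  have h0 : (((shiftFunctorZero C ℤ).hom.app (A N)) ≫ a N) = 0 :=
    horth N (A N) M 0 (hA N) hM _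
  have haN : a N = 0 := by
    have := congrArg (fun f => ((shiftFunctorZero C ℤ).inv.app (A N)) ≫ f) h0
    simpa using this
  rw [IsZero.iff_id_eq_zero]
  have : inv (a N) ≫ a N = 𝟙 M := IsIso.inv_hom_id _
  simp only [haN, Limits.comp_zero] at this
  exact this.symm
end

section
/- Let D be a triangulated category with slice truncations as in the slice filtration, n ≥ 0 an integer, and M₀ →a M₁ →b M₂ a sequence of morphisms such that: (1) M₀ ∈ DT_{≥n} and s_i(a) is an isomorphism for all i ≥ n; (2) M₂ ∈ DT_{<n} and s_i(b) is an isomorphism for all i < n. Then there exists a unique morphism M₂ → M₀[1] making M₀ → M₁ → M₂ → M₀[1] a distinguished triangle, and this triangle is isomorphic to the truncation triangle Π_{≥n}(M₁) → M₁ → Π_{<n}(M₁) → Π_{≥n}(M₁)[1]. -/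
open CategoryTheory CategoryTheory.Limits CategoryTheory.Pretriangulated

section Aux

variable {C : Type*} [Category C] [Preadditive C] [HasZeroObject C] [HasShift C ℤ]
    [∀ n : ℤ, (shiftFunctor C n).Additive] [Pretriangulated C]

lemma aux_isIso_of_isZero {X Y : C} (hX : IsZero X) (hY : IsZero Y) (f : X ⟶ Y) :
    IsIso f :=
  ⟨⟨0, hX.eq_of_src _ _, hY.eq_of_src _ _⟩⟩

/-- If all slices of `f` are isomorphisms and the slice functors are jointly conservative
(in the sense that an object with all slices zero is zero), then `f` is an isomorphism. -/
lemma aux_isIso_of_slices (s : ℕ → C ⥤ C) [∀ i, (s i).CommShift ℤ]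
    [∀ i, (s i).IsTriangulated]
    (hconserv : ∀ X : C, (∀ i, IsZero ((s i).obj X)) → IsZero X)
    {X Y : C} (f : X ⟶ Y) (hf : ∀ i, IsIso ((s i).map f)) : IsIso f := by
  obtain ⟨Z, u, w, hT⟩ := Pretriangulated.distinguished_cocone_triangle f
  have hZ : IsZero Z := hconserv Z (fun i => by
    have h := (s i).map_distinguished _ hT
    have := Triangle.isZero₃_of_isIso₁ _ h (by exact hf i)
    exact this)
  exact (Triangle.isZero₃_iff_isIso₁ _ hT).1 hZ

end Aux

/-- (unext) Let `M₀ →a M₁ →b M₂` with `M₀ ∈ DT_{≥n}`, `M₂ ∈ DT_{<n}`, the slices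
`s_i(a)` isomorphisms for `i ≥ n` and `s_i(b)` isomorphisms for `i < n`. Then there is a
unique `h : M₂ ⟶ M₀[1]` making `M₀ → M₁ → M₂ → M₀[1]` distinguished, and any such
triangle is isomorphic to the truncation triangle `Π_{≥n}M₁ → M₁ → Π_{<n}M₁`. -/
theorem stmt10 {C : Type*} [Category C] [Preadditive C] [HasZeroObject C] [HasShift C ℤ]
    [∀ n : ℤ, (shiftFunctor C n).Additive] [Pretriangulated C]
    (Pge Plt : ℕ → C → Prop)
    (horth : ∀ (n : ℕ) (P Q : C) (k : ℤ), Pge n P → Plt n Q → ∀ f : (P⟦k⟧) ⟶ Q, f = 0)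
    (s : ℕ → C ⥤ C) [∀ i, (s i).CommShift ℤ] [∀ i, (s i).IsTriangulated]
    (hconserv : ∀ X : C, (∀ i, IsZero ((s i).obj X)) → IsZero X)
    (hgeZero : ∀ (n : ℕ) (P : C), Pge n P → ∀ i, i < n → IsZero ((s i).obj P))
    (hltZero : ∀ (n : ℕ) (Q : C), Plt n Q → ∀ i, n ≤ i → IsZero ((s i).obj Q))
    (n : ℕ) {M₀ M₁ M₂ : C} (a : M₀ ⟶ M₁) (b : M₁ ⟶ M₂)
    (h₀ : Pge n M₀) (h₂ : Plt n M₂)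
    (hsa : ∀ i, n ≤ i → IsIso ((s i).map a))
    (hsb : ∀ i, i < n → IsIso ((s i).map b))
    {G L : C} (g : G ⟶ M₁) (l : M₁ ⟶ L) (d : L ⟶ G⟦(1 : ℤ)⟧)
    (hGL : Triangle.mk g l d ∈ distTriang C) (hG : Pge n G) (hL : Plt n L) :
    (∃! h : M₂ ⟶ M₀⟦(1 : ℤ)⟧, Triangle.mk a b h ∈ distTriang C) ∧
    (∀ h : M₂ ⟶ M₀⟦(1 : ℤ)⟧, (Triangle.mk a b h ∈ distTriang C) →
      Nonempty (Triangle.mk a b h ≅ Triangle.mk g l d)) := by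
  -- a basic consequence of the orthogonality assumption: any map `P ⟶ Q` vanishes
  have homZero : ∀ (P Q : C), Pge n P → Plt n Q → ∀ f : P ⟶ Q, f = 0 := by
    intro P Q hP hQ f
    have h0 := horth n P Q 0 hP hQ ((shiftFunctorZero C ℤ).hom.app P ≫ f)
    calc f = (shiftFunctorZero C ℤ).inv.app P ≫ ((shiftFunctorZero C ℤ).hom.app P ≫ f) := by
            simp
      _ = 0 := by rw [h0, Limits.comp_zero]
  -- Existence of a distinguished triangle on (a, b, ?)
  have hab : a ≫ b = 0 := homZero M₀ M₂ h₀ h₂ (a ≫ b)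
  obtain ⟨Z, b', h', hT⟩ := Pretriangulated.distinguished_cocone_triangle a
  obtain ⟨φ, hφ⟩ : ∃ φ : Z ⟶ M₂, b = b' ≫ φ := Triangle.yoneda_exact₂ _ hT b hab
  -- φ : Z ⟶ M₂ with b = b' ≫ φ; show φ is an isomorphism via slices
  have hφiso : IsIso φ := by
    apply aux_isIso_of_slices s hconserv
    intro i
    rcases lt_or_ge i n with hi | hi
    · -- i < n : s_i M₀ = 0, so s_i b' is iso; and s_i b is iso
      have hTi := (s i).map_distinguished _ hT
      have hz : IsZero ((s i).obj M₀) := hgeZero n M₀ h₀ i hi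
      have hb' : IsIso ((s i).map b') :=
        (Triangle.isZero₁_iff_isIso₂ _ hTi).1 (by exact hz)
      have hb := hsb i hi
      have hcomp : (s i).map b' ≫ (s i).map φ = (s i).map b := by
        rw [← Functor.map_comp, ← hφ]
      have : (s i).map φ = inv ((s i).map b') ≫ (s i).map b := by
        rw [IsIso.eq_inv_comp]; exact hcomp
      rw [this]; infer_instance
    · -- i ≥ n : both s_i Z and s_i M₂ are zero
      have hz2 : IsZero ((s i).obj M₂) := hltZero n M₂ h₂ i hi
      have hTi := (s i).map_distinguished _ hT
      have hzZ : IsZero ((s i).obj Z) :=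
        Triangle.isZero₃_of_isIso₁ _ hTi (by exact hsa i hi)
      exact aux_isIso_of_isZero hzZ hz2 _
  -- the triangle (a, b, inv φ ≫ h') is distinguished
  have hdist : Triangle.mk a b (inv φ ≫ h') ∈ distTriang C := by
    refine isomorphic_distinguished _ hT _ ?_
    exact Triangle.isoMk _ _ (Iso.refl _) (Iso.refl _) (asIso φ).symm
      (by show a ≫ 𝟙 M₁ = 𝟙 M₀ ≫ a; simp) (by show b ≫ inv φ = 𝟙 M₁ ≫ b'; simp [hφ])
      (by show (inv φ ≫ h') ≫ (𝟙 M₀)⟦(1 : ℤ)⟧' = inv φ ≫ h'; simp)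
  -- uniqueness of the connecting morphism
  have huniq : ∀ h₁' h₂' : M₂ ⟶ M₀⟦(1 : ℤ)⟧, (Triangle.mk a b h₁' ∈ distTriang C) →
      (Triangle.mk a b h₂' ∈ distTriang C) → h₁' = h₂' := by
    intro h₁' h₂' hd₁ hd₂
    obtain ⟨c, hc₁, hc₂⟩ : ∃ c : M₂ ⟶ M₂,
        b ≫ c = 𝟙 M₁ ≫ b ∧ h₁' ≫ (𝟙 M₀)⟦(1 : ℤ)⟧' = c ≫ h₂' :=
      complete_distinguished_triangle_morphism
        (Triangle.mk a b h₁') (Triangle.mk a b h₂') hd₁ hd₂ (𝟙 M₀) (𝟙 M₁) (by show a ≫ 𝟙 M₁ = 𝟙 M₀ ≫ a; simp)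
    -- b ≫ (c - 𝟙) = 0, so c - 𝟙 factors through h₂' : M₂ ⟶ M₀⟦1⟧
    obtain ⟨e, he⟩ : ∃ e : M₀⟦(1 : ℤ)⟧ ⟶ M₂, c - 𝟙 M₂ = h₂' ≫ e := Triangle.yoneda_exact₃ _ hd₂ (c - 𝟙 M₂)
      (show b ≫ (c - 𝟙 M₂) = 0 by rw [Preadditive.comp_sub, hc₁]; simp)
    have he0 : e = 0 := horth n M₀ M₂ 1 h₀ h₂ e
    have hc : c = 𝟙 M₂ := by
      have h5 := he
      rw [he0, Limits.comp_zero, sub_eq_zero] at h5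
      exact h5
    rw [hc, Category.id_comp] at hc₂
    simpa using hc₂
  -- the isomorphism with the truncation triangle
  have hpart2 : ∀ h : M₂ ⟶ M₀⟦(1 : ℤ)⟧, (Triangle.mk a b h ∈ distTriang C) →
      Nonempty (Triangle.mk a b h ≅ Triangle.mk g l d) := by
    intro h hd
    have hal : a ≫ l = 0 := homZero M₀ L h₀ hL (a ≫ l)
    obtain ⟨α, hα⟩ : ∃ α : M₀ ⟶ G, a = α ≫ g := Triangle.coyoneda_exact₂ _ hGL a hal
    obtain ⟨γ, hγ₁, hγ₂⟩ : ∃ γ : M₂ ⟶ L,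
        b ≫ γ = 𝟙 M₁ ≫ l ∧ h ≫ α⟦(1 : ℤ)⟧' = γ ≫ d :=
      complete_distinguished_triangle_morphism
        (Triangle.mk a b h) (Triangle.mk g l d) hd hGL α (𝟙 M₁) (by show a ≫ 𝟙 M₁ = α ≫ g; simpa using hα)
    -- α is an isomorphism
    have hαiso : IsIso α := by
      apply aux_isIso_of_slices s hconserv
      intro i
      rcases lt_or_ge i n with hi | hi
      · exact aux_isIso_of_isZero (hgeZero n M₀ h₀ i hi) (hgeZero n G hG i hi) _
      · have hTi := (s i).map_distinguished _ hGL
        have hg : IsIso ((s i).map g) :=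
          (Triangle.isZero₃_iff_isIso₁ _ hTi).1 (by exact hltZero n L hL i hi)
        have ha := hsa i hi
        have hcomp : (s i).map α ≫ (s i).map g = (s i).map a := by
          rw [← Functor.map_comp, ← hα]
        have : (s i).map α = (s i).map a ≫ inv ((s i).map g) := by
          rw [IsIso.eq_comp_inv]; exact hcomp
        rw [this]; infer_instance
    -- γ is an isomorphism
    have hγiso : IsIso γ := by
      apply aux_isIso_of_slices s hconserv
      intro i
      rcases lt_or_ge i n with hi | hi
      · have hTi := (s i).map_distinguished _ hGL
        have hl : IsIso ((s i).map l) :=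
          (Triangle.isZero₁_iff_isIso₂ _ hTi).1 (by exact hgeZero n G hG i hi)
        have hb := hsb i hi
        have hcomp : (s i).map b ≫ (s i).map γ = (s i).map l := by
          rw [← Functor.map_comp, hγ₁, Category.id_comp]
        have : (s i).map γ = inv ((s i).map b) ≫ (s i).map l := by
          rw [IsIso.eq_inv_comp]; exact hcomp
        rw [this]; infer_instance
      · exact aux_isIso_of_isZero (hltZero n M₂ h₂ i hi) (hltZero n L hL i hi) _
    -- assemble the morphism of triangles and conclude it is an isomorphism
    let ψ : Triangle.mk a b h ⟶ Triangle.mk g l d :=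
      { hom₁ := α
        hom₂ := 𝟙 M₁
        hom₃ := γ
        comm₁ := by show a ≫ 𝟙 M₁ = α ≫ g; simpa using hα
        comm₂ := hγ₁
        comm₃ := hγ₂ }
    have : IsIso ψ := Triangle.isIso_of_isIsos ψ hαiso (by show IsIso (𝟙 M₁); infer_instance) hγiso
    exact ⟨asIso ψ⟩
  refine ⟨⟨inv φ ≫ h', hdist, fun h hh => huniq h (inv φ ≫ h') hh hdist⟩, hpart2⟩
end

section
/- Let C be a symmetric monoidal category, v : A → 1 a morphism such that both projections A ⊗ A → A are isomorphisms, and let X be an object together with a morphism u : X → 1 and a comultiplication-type morphism Δ : X → X ⊗ X with (u ⊗ id) ∘ Δ = λ⁻¹ and (id ⊗ u) ∘ Δ = ρ⁻¹ (up to unitors). If u factors as u = v ∘ w for some w : X → A, then the morphism X ⊗ A → X (induced by v) is a split epimorphism with section (id_X ⊗ w) ∘ Δ; if additionally the category is Karoubian and the full subcategory of objects M with M ⊗ A → M an isomorphism is closed under retracts, then X lies in that subcategory. -/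
open CategoryTheory CategoryTheory.MonoidalCategory

/-- (donotneed2 abstracted) Let `A` be an idempotent object (`v : A ⟶ 𝟙`, both
projections `A ⊗ A ⟶ A` isomorphisms) in a Karoubian symmetric monoidal category, and
`X` an object with counit `u : X ⟶ 𝟙` and diagonal `Δ : X ⟶ X ⊗ X` compatible with `u`.
If `u` factors as `u = w ≫ v`, then the projection `X ⊗ A ⟶ X` is a split epimorphism
with section `(id_X ⊗ w) ∘ Δ`; and if the subcategory of `M` with `M ⊗ A ⟶ M` an
isomorphism is closed under retracts, then `X` lies in it. -/
theorem stmt15 {C : Type*} [Category C] [MonoidalCategory C] [SymmetricCategory C]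
    [IsIdempotentComplete C]
    {A : C} (v : A ⟶ 𝟙_ C)
    (h₁ : IsIso ((A ◁ v) ≫ (ρ_ A).hom)) (h₂ : IsIso ((v ▷ A) ≫ (λ_ A).hom))
    {X : C} (u : X ⟶ 𝟙_ C) (Δ : X ⟶ X ⊗ X)
    (hΔ₁ : Δ ≫ (X ◁ u) ≫ (ρ_ X).hom = 𝟙 X)
    (hΔ₂ : Δ ≫ (u ▷ X) ≫ (λ_ X).hom = 𝟙 X)
    (w : X ⟶ A) (hw : u = w ≫ v) :
    ((Δ ≫ (X ◁ w)) ≫ ((X ◁ v) ≫ (ρ_ X).hom) = 𝟙 X) ∧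
    ((∀ (M M' : C) (i : M ⟶ M') (r : M' ⟶ M), i ≫ r = 𝟙 M →
        IsIso ((M' ◁ v) ≫ (ρ_ M').hom) → IsIso ((M ◁ v) ≫ (ρ_ M).hom)) →
      IsIso ((X ◁ v) ≫ (ρ_ X).hom)) := by
  have hsec : (Δ ≫ (X ◁ w)) ≫ ((X ◁ v) ≫ (ρ_ X).hom) = 𝟙 X := by
    rw [← hΔ₁, hw]
    simp [MonoidalCategory.whiskerLeft_comp]
  refine ⟨hsec, fun hretract => ?_⟩
  refine hretract X (X ⊗ A) (Δ ≫ (X ◁ w)) ((X ◁ v) ≫ (ρ_ X).hom) hsec ?_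
  have key : ((X ⊗ A) ◁ v) ≫ (ρ_ (X ⊗ A)).hom
      = (α_ X A A).hom ≫ (X ◁ ((A ◁ v) ≫ (ρ_ A).hom)) := by
    simp [MonoidalCategory.whiskerLeft_comp]
  rw [key]
  infer_instance
end

section
/- Let C be a symmetric monoidal category, A an idempotent object as above (v : A → 1 with both projections A ⊗ A → A isomorphisms), M an object with M ⊗ A → M an isomorphism, (N, e : M ⊗ N → P) a pair such that for every Q with Q ⊗ A → Q an isomorphism, the map Hom(Q, N) → Hom(Q ⊗ M, P) is a bijection. Suppose N is 'restricted': for every object K of C, the map Hom(K, N) → Hom(K ⊗ A, N) induced by K ⊗ A → K is a bijection. Then (N, e) is an internal Hom-object from M to P in all of C: for every object K, Hom(K, N) → Hom(K ⊗ M, P) is a bijection. -/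
open CategoryTheory CategoryTheory.MonoidalCategory

/-- (intres, part 1) Let `A` be an idempotent object, `M` an `A`-module
(`M ⊗ A ⟶ M` an isomorphism), and `(N, e : M ⊗ N ⟶ P)` an internal Hom-object from `M`
to `P` relative to the subcategory `D_A` of `A`-modules. If `N` is restricted (for every
`K`, precomposition with `K ⊗ A ⟶ K` gives a bijection `Hom(K,N) ≅ Hom(K ⊗ A, N)`),
then `(N, e)` is an internal Hom-object from `M` to `P` in the whole category. -/
theorem stmt17 {C : Type*} [Category C] [MonoidalCategory C] [SymmetricCategory C]
    {A : C} (v : A ⟶ 𝟙_ C)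
    (h₁ : IsIso ((A ◁ v) ≫ (ρ_ A).hom)) (h₂ : IsIso ((v ▷ A) ≫ (λ_ A).hom))
    {M : C} (hM : IsIso ((M ◁ v) ≫ (ρ_ M).hom))
    {N P : C} (e : M ⊗ N ⟶ P)
    (hIH : ∀ Q : C, IsIso ((Q ◁ v) ≫ (ρ_ Q).hom) →
      Function.Bijective (fun f : Q ⟶ N => (f ▷ M) ≫ (β_ N M).hom ≫ e))
    (hres : ∀ K : C, Function.Bijective
      (fun φ : K ⟶ N => ((K ◁ v) ≫ (ρ_ K).hom) ≫ φ)) :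
    ∀ K : C, Function.Bijective (fun f : K ⟶ N => (f ▷ M) ≫ (β_ N M).hom ≫ e) := by
  intro K
  haveI := h₁; haveI := hM
  -- K ⊗ A is an A-module
  have key : ((K ⊗ A) ◁ v) ≫ (ρ_ (K ⊗ A)).hom
      = (α_ K A A).hom ≫ (K ◁ ((A ◁ v) ≫ (ρ_ A).hom)) := by
    simp [MonoidalCategory.whiskerLeft_comp]
  have hKA : IsIso (((K ⊗ A) ◁ v) ≫ (ρ_ (K ⊗ A)).hom) := by
    rw [key]; infer_instance
  -- left module structure on M
  have hlM : IsIso ((v ▷ M) ≫ (λ_ M).hom) := by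
    have : (v ▷ M) ≫ (λ_ M).hom = (β_ A M).hom ≫ ((M ◁ v) ≫ (ρ_ M).hom) := by
      rw [← Category.assoc, ← BraidedCategory.braiding_naturality_left v M]
      simp
    rw [this]; infer_instance
  -- the comparison iso (K ⊗ A) ⊗ M ≅ K ⊗ M
  set u : (K ⊗ A) ⊗ M ⟶ K ⊗ M := (((K ◁ v) ≫ (ρ_ K).hom) ▷ M) with hu
  have hufact : u = (α_ K A M).hom ≫ (K ◁ ((v ▷ M) ≫ (λ_ M).hom)) := by
    simp [hu, MonoidalCategory.whiskerLeft_comp]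
  have hiso : IsIso u := by rw [hufact]; infer_instance
  -- precomposition with u is a bijection
  have ht : Function.Bijective (fun g : K ⊗ M ⟶ P => u ≫ g) :=
    ⟨fun a b h => by rwa [cancel_epi] at h, fun g => ⟨inv u ≫ g, by simp⟩⟩
  -- the square commutes
  have hsq : ∀ f : K ⟶ N,
      u ≫ ((f ▷ M) ≫ (β_ N M).hom ≫ e)
        = (((((K ◁ v) ≫ (ρ_ K).hom) ≫ f) ▷ M) ≫ (β_ N M).hom ≫ e) := by
    intro f; simp only [hu, comp_whiskerRight, Category.assoc]
  have hcomp : Function.Bijective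
      ((fun g : K ⊗ M ⟶ P => u ≫ g) ∘ (fun f : K ⟶ N => (f ▷ M) ≫ (β_ N M).hom ≫ e)) := by
    have : ((fun g : K ⊗ M ⟶ P => u ≫ g) ∘
        (fun f : K ⟶ N => (f ▷ M) ≫ (β_ N M).hom ≫ e))
        = (fun f : K ⊗ A ⟶ N => (f ▷ M) ≫ (β_ N M).hom ≫ e) ∘
          (fun φ : K ⟶ N => ((K ◁ v) ≫ (ρ_ K).hom) ≫ φ) := by
      funext f; exact hsq f
    rw [this]
    exact (hIH (K ⊗ A) hKA).comp (hres K)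
  constructor
  · exact Function.Injective.of_comp hcomp.injective
  · intro y
    obtain ⟨f, hf⟩ := hcomp.surjective (u ≫ y)
    exact ⟨f, ht.injective hf⟩
end

section
/- Let C be a symmetric monoidal category, v : A → 1 with both projections A ⊗ A → A isomorphisms, M, N objects with M ⊗ A → M and N ⊗ A → N isomorphisms, P any object, and e : M ⊗ N → P a morphism making (N, e) an internal Hom-object from M to P in C. Let e_A : M ⊗ N → P ⊗ A be the unique morphism corresponding to e under the bijection Hom(M ⊗ N, P ⊗ A) ≅ Hom(M ⊗ N, P) (which holds since M ⊗ N ∈ D_A). Then (N, e_A) is an internal Hom-object from M to P ⊗ A in the full subcategory D_A: for all Q with Q ⊗ A → Q an isomorphism, the map Hom(Q, N) → Hom(Q ⊗ M, P ⊗ A) induced by e_A is a bijection. -/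
open CategoryTheory CategoryTheory.MonoidalCategory

/-- Naturality: tensoring `g : X ⟶ P ⊗ A` with `A` and then killing the last `A` factor
agrees with first killing the `A` factor of `X ⊗ A`. -/
lemma stmt19_nat {C : Type*} [Category C] [MonoidalCategory C]
    {A X P : C} (v : A ⟶ 𝟙_ C) (g : X ⟶ P ⊗ A) :
    (g ▷ A) ≫ ((P ⊗ A) ◁ v) ≫ (ρ_ (P ⊗ A)).hom = ((X ◁ v) ≫ (ρ_ X).hom) ≫ g := by
  rw [← Category.assoc, ← whisker_exchange]
  simp

/-- (rl3, injectivity) If `X ⊗ A ⟶ X` is an isomorphism, then post-composition with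
`P ⊗ A ⟶ P` is injective on `Hom(X, P ⊗ A)`. -/
lemma stmt19_inj {C : Type*} [Category C] [MonoidalCategory C]
    {A : C} (v : A ⟶ 𝟙_ C)
    (h₁ : IsIso ((A ◁ v) ≫ (ρ_ A).hom)) (h₂ : IsIso ((v ▷ A) ≫ (λ_ A).hom))
    {X P : C} (hX : IsIso ((X ◁ v) ≫ (ρ_ X).hom)) :
    Function.Injective (fun g : X ⟶ P ⊗ A => g ≫ (P ◁ v) ≫ (ρ_ P).hom) := by
  intro g₁ g₂ h
  simp only at h
  set m₁ : A ⊗ A ⟶ A := (A ◁ v) ≫ (ρ_ A).hom with hm₁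
  set m₂ : A ⊗ A ⟶ A := (v ▷ A) ≫ (λ_ A).hom with hm₂
  -- key reconstruction: g = inv((X◁v)≫ρ) ≫ ((g ≫ k) ▷ A) ≫ (P ◁ (inv m₂ ≫ m₁))
  have key : ∀ g : X ⟶ P ⊗ A,
      g = inv ((X ◁ v) ≫ (ρ_ X).hom) ≫
        ((g ≫ (P ◁ v) ≫ (ρ_ P).hom) ▷ A) ≫ (P ◁ (inv m₂ ≫ m₁)) := by
    intro g
    have e1 : ((P ⊗ A) ◁ v) ≫ (ρ_ (P ⊗ A)).hom
        = (α_ P A A).hom ≫ (P ◁ m₁) := by simp [hm₁]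
    have e2 : (((P ◁ v) ≫ (ρ_ P).hom) ▷ A)
        = (α_ P A A).hom ≫ (P ◁ m₂) := by simp [hm₂]
    calc g = inv ((X ◁ v) ≫ (ρ_ X).hom) ≫ ((X ◁ v) ≫ (ρ_ X).hom) ≫ g := by simp
    _ = inv ((X ◁ v) ≫ (ρ_ X).hom) ≫ (g ▷ A) ≫ ((P ⊗ A) ◁ v) ≫ (ρ_ (P ⊗ A)).hom := by
        rw [stmt19_nat]
    _ = inv ((X ◁ v) ≫ (ρ_ X).hom) ≫ (g ▷ A) ≫ (α_ P A A).hom ≫ (P ◁ m₁) := by rw [e1]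
    _ = _ := by
        rw [comp_whiskerRight, e2]
        simp [← MonoidalCategory.whiskerLeft_comp]
  rw [key g₁, key g₂, h]

/-- The canonical map `(Q ⊗ M) ⊗ A ⟶ Q ⊗ M` is an isomorphism whenever
`M ⊗ A ⟶ M` is. -/
lemma stmt19_tensor_mem {C : Type*} [Category C] [MonoidalCategory C]
    {A : C} (v : A ⟶ 𝟙_ C) {M : C} (hM : IsIso ((M ◁ v) ≫ (ρ_ M).hom)) (Q : C) :
    IsIso (((Q ⊗ M) ◁ v) ≫ (ρ_ (Q ⊗ M)).hom) := by
  have : ((Q ⊗ M) ◁ v) ≫ (ρ_ (Q ⊗ M)).hom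
      = (α_ Q M A).hom ≫ (Q ◁ ((M ◁ v) ≫ (ρ_ M).hom)) := by simp
  rw [this]
  infer_instance

/-- (intres0) Let `A` be an idempotent object, `M, N` objects of the subcategory `D_A` of
`A`-modules, and `(N, e : M ⊗ N ⟶ P)` an internal Hom-object from `M` to `P` in the
whole category. Let `e_A : M ⊗ N ⟶ P ⊗ A` correspond to `e` under the bijection
`Hom(M ⊗ N, P ⊗ A) ≅ Hom(M ⊗ N, P)` (i.e. `e_A ≫ (P ⊗ A ⟶ P) = e`). Then `(N, e_A)`
is an internal Hom-object from `M` to `P ⊗ A` in `D_A`. -/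
theorem stmt19 {C : Type*} [Category C] [MonoidalCategory C] [SymmetricCategory C]
    {A : C} (v : A ⟶ 𝟙_ C)
    (h₁ : IsIso ((A ◁ v) ≫ (ρ_ A).hom)) (h₂ : IsIso ((v ▷ A) ≫ (λ_ A).hom))
    {M N : C} (hM : IsIso ((M ◁ v) ≫ (ρ_ M).hom)) (hN : IsIso ((N ◁ v) ≫ (ρ_ N).hom))
    {P : C} (e : M ⊗ N ⟶ P)
    (hIH : ∀ Q : C, Function.Bijective (fun f : Q ⟶ N => (f ▷ M) ≫ (β_ N M).hom ≫ e))
    (eA : M ⊗ N ⟶ P ⊗ A) (heA : eA ≫ (P ◁ v) ≫ (ρ_ P).hom = e) :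
    ∀ Q : C, IsIso ((Q ◁ v) ≫ (ρ_ Q).hom) →
      Function.Bijective (fun f : Q ⟶ N => (f ▷ M) ≫ (β_ N M).hom ≫ eA) := by
  intro Q hQ
  have hQM := stmt19_tensor_mem v hM Q
  have hinj := stmt19_inj v h₁ h₂ (P := P) hQM
  have comp : ∀ f : Q ⟶ N,
      ((f ▷ M) ≫ (β_ N M).hom ≫ eA) ≫ (P ◁ v) ≫ (ρ_ P).hom
        = (f ▷ M) ≫ (β_ N M).hom ≫ e := by
    intro f; rw [← heA]; simp
  constructor
  · intro f₁ f₂ h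
    simp only at h
    apply (hIH Q).1
    simp only [← comp, h]
  · intro t
    obtain ⟨f, hf⟩ := (hIH Q).2 (t ≫ (P ◁ v) ≫ (ρ_ P).hom)
    simp only at hf
    refine ⟨f, ?_⟩
    apply hinj
    simp only [comp f, hf]
end
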